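/- Extremality of the virtual itineraries. Let 0 ≤ α < 1 < β, k := ⌈α+β⌉, A := {0,…,k−1}, γ := α+β−k+1. (1) If u ∈ A^ℕ satisfies φ̄_∞^{α,β}(u) = 0, φ̄_∞^{α,β}(σu) = α and u ≼ σⁿu for all n ≥ 1, then u ≼ u^{α,β}. (2) If v ∈ A^ℕ satisfies φ̄_∞^{α,β}(v) = 1, φ̄_∞^{α,β}(σv) = γ and σⁿv ≼ v for all n ≥ 1, then v^{α,β} ≼ v. -/

import Mathlib

open Filter Set

/-- The shift map on one-sided sequences. -/
def shft (x : ℕ → ℕ) : ℕ → ℕ := fun n => x (n + 1)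

/-- Strict lexicographic order on one-sided sequences:
`x ≺ y` iff they differ and `x m < y m` at the first index `m` where they differ. -/
def lexLt (x y : ℕ → ℕ) : Prop := ∃ m, (∀ i, i < m → x i = y i) ∧ x m < y m

/-- Lexicographic order `x ≼ y` on one-sided sequences. -/
def lexLe (x y : ℕ → ℕ) : Prop := x = y ∨ lexLt x y

/-- The map `φ̄^{α,β} : ℝ → [0,1]`:  `0` for `t ≤ α`, `(t-α)/β` for `α ≤ t ≤ α+β`,
`1` for `t ≥ α+β`. -/
noncomputable def phiB (α β t : ℝ) : ℝ :=
  if t ≤ α then 0 else if α + β ≤ t then 1 else (t - α) / β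

/-- `φ̄ₙ^{α,β}(x) = φ̄^{α,β}(x₀ + φ̄^{α,β}(x₁ + ⋯ + φ̄^{α,β}(x_{n-1})⋯))`. -/
noncomputable def phiBN (α β : ℝ) : ℕ → (ℕ → ℕ) → ℝ
  | 0, _ => 0
  | n + 1, x => phiB α β (x 0 + phiBN α β n (shft x))

/-- `φ̄_∞^{α,β}(x) = limₙ φ̄ₙ^{α,β}(x)`; the sequence `φ̄ₙ^{α,β}(x)` is nondecreasing in `n`
and bounded, so its limit is its supremum. -/
noncomputable def phiBInf (α β : ℝ) (x : ℕ → ℕ) : ℝ := ⨆ n, phiBN α β n x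

/-- `T̂_{α,β}(x) = βx + α − ⌊βx + α⌋`. -/
noncomputable def Tlow (α β x : ℝ) : ℝ := β * x + α - ⌊β * x + α⌋

/-- `Ť_{α,β}(x) = βx + α + 1 − ⌈βx + α⌉`. -/
noncomputable def Thigh (α β x : ℝ) : ℝ := β * x + α + 1 - ⌈β * x + α⌉

/-- `k = ⌈α + β⌉`, the size of the alphabet `A = {0, …, k-1}`. -/
noncomputable def kAB (α β : ℝ) : ℕ := (⌈α + β⌉).toNat

/-- The string `u^{α,β}`, the coding of the orbit of `0`:
`u^{α,β}ₙ = ⌊β T̂ⁿ_{α,β}(0) + α⌋`. -/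
noncomputable def uItin (α β : ℝ) : ℕ → ℕ := fun n => (⌊β * (Tlow α β)^[n] 0 + α⌋).toNat

/-- The string `v^{α,β}`, the coding of the orbit of `1`:
`v^{α,β}ₙ = ⌈β Ťⁿ_{α,β}(1) + α⌉ − 1`. -/
noncomputable def vItin (α β : ℝ) : ℕ → ℕ := fun n => (⌈β * (Thigh α β)^[n] 1 + α⌉ - 1).toNat

/-- The shift space `Σ(u,v) = {x ∈ A^ℕ : u ≼ σⁿx ≼ v for all n ≥ 0}`, `A = {0,…,k-1}`. -/
def SigSet (k : ℕ) (u v : ℕ → ℕ) : Set (ℕ → ℕ) :=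
  {x | (∀ i, x i < k) ∧ ∀ n, lexLe u (shft^[n] x) ∧ lexLe (shft^[n] x) v}

/-- The number of words of length `n` in the language of `Σ(u,v)` (prefixes of elements). -/
noncomputable def nWords (k : ℕ) (u v : ℕ → ℕ) (n : ℕ) : ℕ :=
  Nat.card {w : Fin n → ℕ // ∃ x ∈ SigSet k u v, ∀ i : Fin n, x i.1 = w i}

/-- The topological entropy (base 2) of `Σ(u,v)`:
`h = limₙ (1/n) log₂ card(Lₙ)` (the limit exists by subadditivity, so it equals the limsup;
it is `0` when `Σ(u,v) = ∅`). -/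
noncomputable def entS (k : ℕ) (u v : ℕ → ℕ) : ℝ :=
  Filter.limsup (fun n : ℕ => Real.logb 2 (nWords k u v n) / (n : ℝ)) Filter.atTop

/-- Concatenation of the word `w₀ ⋯ w_{p-1}` (the first `p` letters of `w`) with the
string `y`. -/
def wcat (p : ℕ) (w y : ℕ → ℕ) : ℕ → ℕ := fun n => if n < p then w n else y (n - p)

lemma phiB_eq (α β t : ℝ) (hβ : 0 < β) :
    phiB α β t = max 0 (min 1 ((t - α) / β)) := by
  unfold phiB
  split_ifs with h1 h2
  · have h : (t - α) / β ≤ 0 := div_nonpos_of_nonpos_of_nonneg (by linarith) hβ.le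
    rw [min_eq_right (by linarith), max_eq_left h]
  · have h : 1 ≤ (t - α) / β := (le_div_iff₀ hβ).2 (by linarith)
    rw [min_eq_left h, max_eq_right (by norm_num : (0:ℝ) ≤ 1)]
  · push_neg at h1 h2
    have h : 0 ≤ (t - α) / β := div_nonneg (by linarith) hβ.le
    have h' : (t - α) / β ≤ 1 := (div_le_one hβ).2 (by linarith)
    rw [min_eq_right h', max_eq_right h]

lemma phiB_nonneg (α β t : ℝ) (hβ : 0 < β) : 0 ≤ phiB α β t := by
  rw [phiB_eq _ _ _ hβ]; exact le_max_left _ _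

lemma phiB_le_one (α β t : ℝ) (hβ : 0 < β) : phiB α β t ≤ 1 := by
  rw [phiB_eq _ _ _ hβ]
  exact max_le (by norm_num) (min_le_left _ _)

lemma phiB_mono (α β : ℝ) (hβ : 0 < β) : Monotone (phiB α β) := by
  intro s t h
  rw [phiB_eq _ _ _ hβ, phiB_eq _ _ _ hβ]
  gcongr

lemma phiB_cont (α β : ℝ) (hβ : 0 < β) : Continuous (phiB α β) := by
  have : phiB α β = fun t => max 0 (min 1 ((t - α) / β)) := funext fun t => phiB_eq α β t hβ
  rw [this]
  fun_prop

lemma key1 (α β s t : ℝ) (hβ : 0 < β) (hs1 : α ≤ s) (hs2 : s < α + β) (hst : s < t) :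
    (s - α) / β < phiB α β t := by
  rw [phiB_eq _ _ _ hβ]
  have h1 : (s - α) / β < 1 := (div_lt_one hβ).2 (by linarith)
  have h2 : (s - α) / β < (t - α) / β := by gcongr
  exact lt_max_of_lt_right (lt_min h1 h2)

lemma key2 (α β s t : ℝ) (hβ : 0 < β) (hs1 : α < s) (hs2 : s ≤ α + β) (hst : t < s) :
    phiB α β t < (s - α) / β := by
  rw [phiB_eq _ _ _ hβ]
  have h0 : 0 < (s - α) / β := div_pos (by linarith) hβ
  have h2 : (t - α) / β < (s - α) / β := by gcongr
  exact max_lt h0 ((min_le_right _ _).trans_lt h2)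

lemma phiBN_nonneg (α β : ℝ) (hβ : 0 < β) : ∀ n x, 0 ≤ phiBN α β n x := by
  intro n x
  cases n with
  | zero => exact le_refl 0
  | succ n => exact phiB_nonneg _ _ _ hβ

lemma phiBN_le_one (α β : ℝ) (hβ : 0 < β) : ∀ n x, phiBN α β n x ≤ 1 := by
  intro n x
  cases n with
  | zero => norm_num [phiBN]
  | succ n => exact phiB_le_one _ _ _ hβ

lemma phiBN_le_succ (α β : ℝ) (hβ : 0 < β) : ∀ n x, phiBN α β n x ≤ phiBN α β (n+1) x := by
  intro n
  induction n with
  | zero => intro x; exact phiB_nonneg _ _ _ hβ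
  | succ n ih =>
    intro x
    show phiB α β ((x 0 : ℝ) + phiBN α β n (shft x)) ≤
      phiB α β ((x 0 : ℝ) + phiBN α β (n+1) (shft x))
    exact phiB_mono α β hβ (by have := ih (shft x); linarith)

lemma phiBN_mono (α β : ℝ) (hβ : 0 < β) (x : ℕ → ℕ) :
    Monotone (fun n => phiBN α β n x) :=
  monotone_nat_of_le_succ (fun n => phiBN_le_succ α β hβ n x)

lemma phiBN_bdd (α β : ℝ) (hβ : 0 < β) (x : ℕ → ℕ) :
    BddAbove (Set.range fun n => phiBN α β n x) :=
  ⟨1, by rintro _ ⟨n, rfl⟩; exact phiBN_le_one α β hβ n x⟩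

lemma phiBInf_nonneg (α β : ℝ) (hβ : 0 < β) (x : ℕ → ℕ) : 0 ≤ phiBInf α β x :=
  le_ciSup_of_le (phiBN_bdd α β hβ x) 0 (le_refl 0)

lemma phiBInf_le_one (α β : ℝ) (hβ : 0 < β) (x : ℕ → ℕ) : phiBInf α β x ≤ 1 :=
  ciSup_le (fun n => phiBN_le_one α β hβ n x)

lemma phiBInf_rec (α β : ℝ) (hβ : 0 < β) (x : ℕ → ℕ) :
    phiBInf α β x = phiB α β (x 0 + phiBInf α β (shft x)) := by
  have h1 : Tendsto (fun n => phiBN α β n x) atTop (nhds (phiBInf α β x)) :=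
    tendsto_atTop_ciSup (phiBN_mono α β hβ x) (phiBN_bdd α β hβ x)
  have h2 : Tendsto (fun n => phiBN α β n (shft x)) atTop (nhds (phiBInf α β (shft x))) :=
    tendsto_atTop_ciSup (phiBN_mono α β hβ (shft x)) (phiBN_bdd α β hβ (shft x))
  have h3 : Tendsto (fun n => phiB α β ((x 0 : ℝ) + phiBN α β n (shft x))) atTop
      (nhds (phiB α β (x 0 + phiBInf α β (shft x)))) :=
    ((phiB_cont α β hβ).tendsto _).comp (h2.const_add _)
  have h4 : Tendsto (fun n => phiBN α β (n+1) x) atTop (nhds (phiBInf α β x)) :=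
    h1.comp (tendsto_add_atTop_nat 1)
  exact tendsto_nhds_unique h4 h3

lemma shft_iter (x : ℕ → ℕ) : ∀ n i, (shft^[n] x) i = x (n + i) := by
  intro n
  induction n generalizing x with
  | zero => intro i; simp
  | succ n ih =>
    intro i
    rw [Function.iterate_succ_apply]
    rw [ih (shft x) i]
    show x (n + i + 1) = x (n + 1 + i)
    congr 1; omega

lemma Tlow_mem' (α β y : ℝ) : Tlow α β y ∈ Set.Ico (0:ℝ) 1 := by
  unfold Tlow
  constructor
  · have := Int.floor_le (β * y + α); linarith
  · have := Int.lt_floor_add_one (β * y + α); linarith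

lemma Tlow_mem (α β : ℝ) : ∀ n, (Tlow α β)^[n] 0 ∈ Set.Ico (0:ℝ) 1 := by
  intro n
  induction n with
  | zero => simp
  | succ n _ =>
    rw [Function.iterate_succ_apply']
    exact Tlow_mem' α β _

lemma Thigh_mem' (α β y : ℝ) : Thigh α β y ∈ Set.Ioc (0:ℝ) 1 := by
  unfold Thigh
  constructor
  · have := Int.ceil_lt_add_one (β * y + α); linarith
  · have := Int.le_ceil (β * y + α); linarith

lemma Thigh_mem (α β : ℝ) : ∀ n, (Thigh α β)^[n] 1 ∈ Set.Ioc (0:ℝ) 1 := by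
  intro n
  induction n with
  | zero => simp
  | succ n _ =>
    rw [Function.iterate_succ_apply']
    exact Thigh_mem' α β _

lemma lex_total (x y : ℕ → ℕ) : lexLe x y ∨ lexLt y x := by
  by_cases h : x = y
  · exact Or.inl (Or.inl h)
  · have hne : ∃ n, x n ≠ y n := by
      by_contra h'; push_neg at h'; exact h (funext h')
    classical
    have hm := Nat.find_spec hne
    have hag : ∀ i, i < Nat.find hne → x i = y i :=
      fun i hi => not_not.1 (Nat.find_min hne hi)
    rcases lt_or_gt_of_ne hm with h1 | h1
    · exact Or.inl (Or.inr ⟨_, hag, h1⟩)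
    · exact Or.inr ⟨_, fun i hi => (hag i hi).symm, h1⟩

/-- **Extremality of the virtual itineraries.** Let `0 ≤ α < 1 < β`, `k = ⌈α+β⌉`,
`γ = α+β−k+1`. (1) If `u ∈ A^ℕ` satisfies `φ̄_∞^{α,β}(u) = 0`, `φ̄_∞^{α,β}(σu) = α`
and `u ≼ σⁿu` for all `n ≥ 1`, then `u ≼ u^{α,β}`. (2) If `v ∈ A^ℕ` satisfies
`φ̄_∞^{α,β}(v) = 1`, `φ̄_∞^{α,β}(σv) = γ` and `σⁿv ≼ v` for all `n ≥ 1`, then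
`v^{α,β} ≼ v`. -/
theorem extremality_of_itineraries (α β : ℝ) (hα0 : 0 ≤ α) (hα1 : α < 1) (hβ : 1 < β) :
    (∀ u : ℕ → ℕ, (∀ i, u i < kAB α β) →
      phiBInf α β u = 0 → phiBInf α β (shft u) = α →
      (∀ n, 1 ≤ n → lexLe u (shft^[n] u)) →
      lexLe u (uItin α β)) ∧
    (∀ v : ℕ → ℕ, (∀ i, v i < kAB α β) →
      phiBInf α β v = 1 → phiBInf α β (shft v) = α + β - kAB α β + 1 →
      (∀ n, 1 ≤ n → lexLe (shft^[n] v) v) →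
      lexLe (vItin α β) v) := by
  have hβ0 : (0:ℝ) < β := by linarith
  constructor
  · intro u _ h0 _ _
    rcases lex_total u (uItin α β) with h | h
    · exact h
    · exfalso
      obtain ⟨m, hag, hlt⟩ := h
      set x : ℕ → ℝ := fun n => (Tlow α β)^[n] 0 with hxdef
      have hx : ∀ n, 0 ≤ x n ∧ x n < 1 := fun n => ⟨(Tlow_mem α β n).1, (Tlow_mem α β n).2⟩
      set A : ℕ → ℝ := fun n => phiBInf α β (shft^[n] u) with hAdef
      have hArec : ∀ n, A n = phiB α β (u n + A (n+1)) := by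
        intro n
        have h := phiBInf_rec α β hβ0 (shft^[n] u)
        have e1 : (shft^[n] u) 0 = u n := by rw [shft_iter, Nat.add_zero]
        have e2 : shft (shft^[n] u) = shft^[n+1] u := (Function.iterate_succ_apply' shft n u).symm
        rw [e1, e2] at h
        exact h
      have hAnn : ∀ n, 0 ≤ A n := fun n => phiBInf_nonneg α β hβ0 _
      have hcast : ∀ n, (uItin α β n : ℝ) = ((⌊β * x n + α⌋ : ℤ) : ℝ) := by
        intro n
        have hnn : (0:ℝ) ≤ β * x n + α := by nlinarith [(hx n).1]
        have hr : (uItin α β n : ℝ) = ((⌊β * x n + α⌋).toNat : ℝ) := rfl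
        rw [hr]
        exact_mod_cast Int.toNat_of_nonneg (Int.floor_nonneg.2 hnn)
      have hxrec : ∀ n, x (n+1) = β * x n + α - ⌊β * x n + α⌋ := by
        intro n
        show (Tlow α β)^[n+1] 0 = _
        rw [Function.iterate_succ_apply']
        rfl
      have step : ∀ n, (↑(u n) + A (n+1) > β * x n + α) → x n < A n := by
        intro n ht
        have hs1 : α ≤ β * x n + α := by nlinarith [(hx n).1]
        have hs2 : β * x n + α < α + β := by nlinarith [(hx n).2]
        have hxval : x n = (β * x n + α - α) / β := by field_simp; ring
        rw [hArec n, hxval]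
        exact key1 α β _ _ hβ0 hs1 hs2 ht
      have main : ∀ j, j ≤ m → x (m - j) < A (m - j) := by
        intro j
        induction j with
        | zero =>
          intro _
          simp only [Nat.sub_zero]
          apply step m
          have h1' : uItin α β m + 1 ≤ u m := Nat.succ_le_of_lt hlt
          have h1 : (uItin α β m : ℝ) + 1 ≤ (u m : ℝ) := by exact_mod_cast h1'
          have h2 : β * x m + α < (⌊β * x m + α⌋ : ℝ) + 1 := Int.lt_floor_add_one _
          have h3 := hAnn (m+1)
          rw [hcast m] at h1
          linarith
        | succ j ih =>
          intro hj
          have hprev := ih (by omega)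
          have hn1 : m - j = (m - (j+1)) + 1 := by omega
          set n := m - (j+1) with hndef
          rw [hn1] at hprev
          apply step n
          have heq : u n = uItin α β n := (hag n (by omega)).symm
          have hsplit : (uItin α β n : ℝ) + x (n+1) = β * x n + α := by
            rw [hcast n, hxrec n]; ring
          rw [heq]
          linarith
      have hfin := main m le_rfl
      simp only [Nat.sub_self] at hfin
      have hx0 : x 0 = 0 := by simp [hxdef]
      have hA0 : A 0 = 0 := by simpa [hAdef] using h0
      rw [hx0, hA0] at hfin
      exact lt_irrefl 0 hfin
  · intro v _ h0 _ _
    rcases lex_total (vItin α β) v with h | h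
    · exact h
    · exfalso
      obtain ⟨m, hag, hlt⟩ := h
      set y : ℕ → ℝ := fun n => (Thigh α β)^[n] 1 with hydef
      have hy : ∀ n, 0 < y n ∧ y n ≤ 1 := fun n => ⟨(Thigh_mem α β n).1, (Thigh_mem α β n).2⟩
      set B : ℕ → ℝ := fun n => phiBInf α β (shft^[n] v) with hBdef
      have hBrec : ∀ n, B n = phiB α β (v n + B (n+1)) := by
        intro n
        have h := phiBInf_rec α β hβ0 (shft^[n] v)
        have e1 : (shft^[n] v) 0 = v n := by rw [shft_iter, Nat.add_zero]
        have e2 : shft (shft^[n] v) = shft^[n+1] v := (Function.iterate_succ_apply' shft n v).symm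
        rw [e1, e2] at h
        exact h
      have hBle : ∀ n, B n ≤ 1 := fun n => phiBInf_le_one α β hβ0 _
      have hceil : ∀ n, (1:ℤ) ≤ ⌈β * y n + α⌉ := by
        intro n
        have hpos : (0:ℝ) < β * y n + α := by nlinarith [(hy n).1]
        exact Int.ceil_pos.2 hpos
      have hcast : ∀ n, (vItin α β n : ℝ) = ((⌈β * y n + α⌉ : ℤ) : ℝ) - 1 := by
        intro n
        have hr : (vItin α β n : ℝ) = ((⌈β * y n + α⌉ - 1).toNat : ℝ) := rfl
        rw [hr]
        have h1 : ((⌈β * y n + α⌉ - 1).toNat : ℤ) = ⌈β * y n + α⌉ - 1 :=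
          Int.toNat_of_nonneg (by have := hceil n; omega)
        exact_mod_cast h1
      have hyrec : ∀ n, y (n+1) = β * y n + α + 1 - ⌈β * y n + α⌉ := by
        intro n
        show (Thigh α β)^[n+1] 1 = _
        rw [Function.iterate_succ_apply']
        rfl
      have step : ∀ n, (↑(v n) + B (n+1) < β * y n + α) → B n < y n := by
        intro n ht
        have hs1 : α < β * y n + α := by nlinarith [(hy n).1]
        have hs2 : β * y n + α ≤ α + β := by nlinarith [(hy n).2]
        have hyval : y n = (β * y n + α - α) / β := by field_simp; ring
        rw [hBrec n, hyval]
        exact key2 α β _ _ hβ0 hs1 hs2 ht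
      have main : ∀ j, j ≤ m → B (m - j) < y (m - j) := by
        intro j
        induction j with
        | zero =>
          intro _
          simp only [Nat.sub_zero]
          apply step m
          have h1' : v m + 1 ≤ vItin α β m := Nat.succ_le_of_lt hlt
          have h1 : (v m : ℝ) + 1 ≤ (vItin α β m : ℝ) := by exact_mod_cast h1'
          have h2 : ((⌈β * y m + α⌉ : ℤ) : ℝ) < β * y m + α + 1 := Int.ceil_lt_add_one _
          have h3 := hBle (m+1)
          rw [hcast m] at h1
          linarith
        | succ j ih =>
          intro hj
          have hprev := ih (by omega)
          have hn1 : m - j = (m - (j+1)) + 1 := by omega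
          set n := m - (j+1) with hndef
          rw [hn1] at hprev
          apply step n
          have heq : v n = vItin α β n := hag n (by omega)
          have hsplit : (vItin α β n : ℝ) + y (n+1) = β * y n + α := by
            rw [hcast n, hyrec n]; ring
          rw [heq]
          linarith
      have hfin := main m le_rfl
      simp only [Nat.sub_self] at hfin
      have hy0 : y 0 = 1 := by simp [hydef]
      have hB0 : B 0 = 1 := by simpa [hBdef] using h0
      rw [hy0, hB0] at hfin
      exact lt_irrefl 1 hfin
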